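/- Let m be a measure, and suppose a family of measurable sets satisfies: for all k > 1 and t > 0, m({|∇u| > t} ∩ {u ≤ k}) ≤ Ck/t² and m({u > k}) ≤ C/k^{N/(N-2)}, with N > 2. Then choosing k = t^{(N-2)/(N-1)} yields m({|∇u| > t}) ≤ 2C/t^{N/(N-1)} for all t ≥ 1. -/

import Mathlib

open MeasureTheory Filter Topology

/-- Abstract gradient-level-set estimate: if `m({g > t} ∩ {u ≤ k}) ≤ C k / t²` for all
`k > 1`, `t > 0`, and `m({u > k}) ≤ C / k^{N/(N-2)}` for all `k ≥ 1` (with `N > 2`),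
then choosing `k = t^{(N-2)/(N-1)}` yields `m({g > t}) ≤ 2C / t^{N/(N-1)}` for `t ≥ 1`. -/
theorem gradient_level_set_estimate {α : Type*} [MeasurableSpace α] (μ : Measure α)
    (N : ℕ) (hN : 2 < N) (g u : α → ℝ) (hg : Measurable g) (hu : Measurable u)
    (C : ℝ) (hC : 0 ≤ C)
    (h1 : ∀ k t : ℝ, 1 < k → 0 < t →
      μ ({x | t < g x} ∩ {x | u x ≤ k}) ≤ ENNReal.ofReal (C * k / t ^ 2))
    (h2 : ∀ k : ℝ, 1 ≤ k →
      μ {x | k < u x} ≤ ENNReal.ofReal (C / k ^ ((N : ℝ) / ((N : ℝ) - 2)))) :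
    ∀ t : ℝ, 1 ≤ t →
      μ {x | t < g x} ≤ ENNReal.ofReal (2 * C / t ^ ((N : ℝ) / ((N : ℝ) - 1))) := by
  intro t ht
  have htpos : (0:ℝ) < t := lt_of_lt_of_le one_pos ht
  have hN2 : (2:ℝ) < (N:ℝ) := by exact_mod_cast hN
  have hd1 : (0:ℝ) < (N:ℝ) - 1 := by linarith
  have hd2 : (0:ℝ) < (N:ℝ) - 2 := by linarith
  set θ : ℝ := ((N:ℝ) - 2) / ((N:ℝ) - 1) with hθ
  set k₀ : ℝ := t ^ θ with hk₀
  have hθpos : 0 < θ := div_pos hd2 hd1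
  have hk₀1 : 1 ≤ k₀ := Real.one_le_rpow ht hθpos.le
  have hk₀pos : 0 < k₀ := lt_of_lt_of_le one_pos hk₀1
  -- the bound for every k > k₀
  have key : ∀ k : ℝ, k₀ < k →
      μ {x | t < g x} ≤ ENNReal.ofReal (C * k / t ^ 2 + C / k ^ ((N:ℝ)/((N:ℝ)-2))) := by
    intro k hk
    have hk1 : 1 < k := lt_of_le_of_lt hk₀1 hk
    have hkpos : 0 < k := lt_trans one_pos hk1
    have hsub : {x | t < g x} ⊆ ({x | t < g x} ∩ {x | u x ≤ k}) ∪ {x | k < u x} := by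
      intro x hx
      by_cases h : u x ≤ k
      · exact Or.inl ⟨hx, h⟩
      · exact Or.inr (lt_of_not_ge h)
    calc μ {x | t < g x}
        ≤ μ (({x | t < g x} ∩ {x | u x ≤ k}) ∪ {x | k < u x}) := measure_mono hsub
      _ ≤ μ ({x | t < g x} ∩ {x | u x ≤ k}) + μ {x | k < u x} := measure_union_le _ _
      _ ≤ ENNReal.ofReal (C * k / t ^ 2) + ENNReal.ofReal (C / k ^ ((N:ℝ)/((N:ℝ)-2))) :=
          add_le_add (h1 k t hk1 htpos) (h2 k hk1.le)
      _ = ENNReal.ofReal (C * k / t ^ 2 + C / k ^ ((N:ℝ)/((N:ℝ)-2))) := by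
          rw [ENNReal.ofReal_add (by positivity) (by positivity)]
  -- continuity of the bound at k₀ from the right
  have hrcont : ContinuousAt (fun k : ℝ => C * k / t ^ 2 + C / k ^ ((N:ℝ)/((N:ℝ)-2))) k₀ := by
    have hrp : ContinuousAt (fun k : ℝ => k ^ ((N:ℝ)/((N:ℝ)-2))) k₀ :=
      Real.continuousAt_rpow_const k₀ _ (Or.inl hk₀pos.ne')
    have hne : k₀ ^ ((N:ℝ)/((N:ℝ)-2)) ≠ 0 := by positivity
    exact ((continuousAt_const.mul continuousAt_id).div continuousAt_const (by positivity)).add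
      (continuousAt_const.div hrp hne)
  have hcont : Tendsto (fun k : ℝ => ENNReal.ofReal (C * k / t ^ 2 + C / k ^ ((N:ℝ)/((N:ℝ)-2))))
      (𝓝[>] k₀) (𝓝 (ENNReal.ofReal (C * k₀ / t ^ 2 + C / k₀ ^ ((N:ℝ)/((N:ℝ)-2))))) :=
    (ENNReal.continuous_ofReal.continuousAt.comp hrcont).tendsto.mono_left nhdsWithin_le_nhds
  have hlim : μ {x | t < g x} ≤
      ENNReal.ofReal (C * k₀ / t ^ 2 + C / k₀ ^ ((N:ℝ)/((N:ℝ)-2))) :=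
    ge_of_tendsto hcont (eventually_nhdsWithin_of_forall fun k hk => key k hk)
  refine hlim.trans (le_of_eq ?_)
  congr 1
  -- arithmetic: C·k₀/t² + C/k₀^{N/(N-2)} = 2C/t^{N/(N-1)}
  have e1 : k₀ ^ ((N:ℝ)/((N:ℝ)-2)) = t ^ ((N:ℝ)/((N:ℝ)-1)) := by
    rw [hk₀, ← Real.rpow_mul htpos.le]
    congr 1
    rw [hθ]; field_simp
  have hbt : t ^ ((N:ℝ)/((N:ℝ)-1)) * k₀ = t ^ 2 := by
    rw [hk₀, ← Real.rpow_add htpos]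
    rw [show (N:ℝ)/((N:ℝ)-1) + θ = 2 by rw [hθ]; field_simp; ring]
    norm_num [Real.rpow_two]
  have htb : (0:ℝ) < t ^ ((N:ℝ)/((N:ℝ)-1)) := Real.rpow_pos_of_pos htpos _
  rw [e1]
  field_simp
  linear_combination C * hbt
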